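/- Let Z be a p×n random matrix with i.i.d. standard normal entries and set W = ZZᵀ (the central Wishart matrix W_p(n,I_p,0)). Then for every integer i with 1 ≤ i ≤ p ≤ n, i! · E[ Tr_i(W) ] = (n)_i · (p)_i. -/

import Mathlib

open Matrix MeasureTheory ProbabilityTheory

/-- The law of a `p × n` random matrix with i.i.d. standard normal entries. -/
noncomputable def gaussMatrix (p n : ℕ) : Measure (Fin p → Fin n → ℝ) :=
  Measure.pi fun _ : Fin p => Measure.pi fun _ : Fin n => gaussianReal 0 1

open Classical in
/-- `Tr_i(S)`: the `i`-th elementary symmetric function of the eigenvalues (listed with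
multiplicity) of the real symmetric matrix `S`; junk value `0` if `S` is not symmetric. -/
noncomputable def trElem {ι : Type*} [Fintype ι] [DecidableEq ι]
    (S : Matrix ι ι ℝ) (i : ℕ) : ℝ :=
  if h : S.IsHermitian then
    ∑ J ∈ Finset.powersetCard i (Finset.univ : Finset ι), ∏ j ∈ J, h.eigenvalues j
  else 0

section Aux
open Real


noncomputable def stdGauss : Measure ℝ := gaussianReal 0 1

lemma stdGauss_eq : stdGauss = (volume : Measure ℝ).withDensity
    (fun x => ENNReal.ofReal ((Real.sqrt (2 * Real.pi))⁻¹ * Real.exp (-x ^ 2 / 2))) := by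
  rw [stdGauss, gaussianReal, if_neg one_ne_zero]
  congr 1
  ext x
  rw [gaussianPDF, gaussianPDFReal]
  norm_num

lemma integrable_pow_gauss (k : ℕ) : Integrable (fun x : ℝ => x ^ k) stdGauss := by
  rw [stdGauss_eq]
  rw [integrable_withDensity_iff (by measurability) (by
    filter_upwards with x; exact ENNReal.ofReal_lt_top)]
  have h : ∀ x : ℝ, x ^ k * (ENNReal.ofReal ((Real.sqrt (2 * Real.pi))⁻¹ *
      Real.exp (-x ^ 2 / 2))).toReal
      = (Real.sqrt (2 * Real.pi))⁻¹ * (x ^ k * Real.exp (-(2⁻¹ : ℝ) * x ^ 2)) := by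
    intro x
    rw [ENNReal.toReal_ofReal (by positivity)]
    ring_nf
  simp_rw [h]
  apply Integrable.const_mul
  have := integrable_rpow_mul_exp_neg_mul_sq (b := 2⁻¹) (by norm_num) (s := (k : ℝ))
    (lt_of_lt_of_le neg_one_lt_zero (Nat.cast_nonneg k))
  simpa [Real.rpow_natCast] using this

lemma stdGauss_prob : IsProbabilityMeasure stdGauss := by
  rw [stdGauss]; infer_instance

lemma integral_gauss_pdf_smul (f : ℝ → ℝ) :
    ∫ x, f x ∂stdGauss
      = ∫ x, ((Real.sqrt (2 * Real.pi))⁻¹ * Real.exp (-x ^ 2 / 2)) * f x := by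
  rw [stdGauss_eq]
  simp_rw [ENNReal.ofReal]
  rw [integral_withDensity_eq_integral_smul₀ (by measurability) f]
  congr 1
  ext x
  rw [NNReal.smul_def, Real.coe_toNNReal _ (by positivity)]
  rfl

lemma integral_pow_zero_gauss : ∫ x, x ^ 0 ∂stdGauss = 1 := by
  have := stdGauss_prob
  simp

lemma integral_pow_one_gauss : ∫ x, x ^ 1 ∂stdGauss = 0 := by
  rw [integral_gauss_pdf_smul]
  have key : ∫ x : ℝ, ((Real.sqrt (2 * Real.pi))⁻¹ * Real.exp (-x ^ 2 / 2)) * x ^ 1 = 0 := by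
    have hderiv : ∀ x : ℝ, HasDerivAt
        (fun y : ℝ => -(Real.sqrt (2 * Real.pi))⁻¹ * Real.exp (-y ^ 2 / 2))
        (((Real.sqrt (2 * Real.pi))⁻¹ * Real.exp (-x ^ 2 / 2)) * x ^ 1) x := by
      intro x
      have h1 : HasDerivAt (fun y : ℝ => -y ^ 2 / 2) (-x) x := by
        have := ((hasDerivAt_pow 2 x).neg).div_const 2
        refine this.congr_deriv ?_
        simp
        ring
      have := (h1.exp).const_mul (-(Real.sqrt (2 * Real.pi))⁻¹)
      exact this.congr_deriv (by ring)
    have hint : Integrable (fun x : ℝ =>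
        ((Real.sqrt (2 * Real.pi))⁻¹ * Real.exp (-x ^ 2 / 2)) * x ^ 1) := by
      have h : ∀ x : ℝ, ((Real.sqrt (2 * Real.pi))⁻¹ * Real.exp (-x ^ 2 / 2)) * x ^ 1
          = (Real.sqrt (2 * Real.pi))⁻¹ * (x * Real.exp (-(2⁻¹:ℝ) * x ^ 2)) := by
        intro x; ring_nf
      simp_rw [h]
      exact (integrable_mul_exp_neg_mul_sq (by norm_num)).const_mul _
    have hf : Integrable (fun x : ℝ =>
        -(Real.sqrt (2 * Real.pi))⁻¹ * Real.exp (-x ^ 2 / 2)) := by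
      have h : ∀ x : ℝ, -(Real.sqrt (2 * Real.pi))⁻¹ * Real.exp (-x ^ 2 / 2)
          = -(Real.sqrt (2 * Real.pi))⁻¹ * Real.exp (-(2⁻¹:ℝ) * x ^ 2) := by
        intro x; ring_nf
      simp_rw [h]
      exact (integrable_exp_neg_mul_sq (by norm_num)).const_mul _
    exact integral_eq_zero_of_hasDerivAt_of_integrable hderiv hint hf
  rw [← key]

lemma integral_pow_two_gauss : ∫ x, x ^ 2 ∂stdGauss = 1 := by
  have hprob := stdGauss_prob
  -- ∫ (x^2 - 1) dGauss = 0, since (x²-1)·pdf is the derivative of -x·pdf.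
  have key : ∫ x, (x ^ 2 - 1) ∂stdGauss = 0 := by
    rw [integral_gauss_pdf_smul]
    have hderiv : ∀ x : ℝ, HasDerivAt
        (fun y : ℝ => -(Real.sqrt (2 * Real.pi))⁻¹ * (y * Real.exp (-y ^ 2 / 2)))
        (((Real.sqrt (2 * Real.pi))⁻¹ * Real.exp (-x ^ 2 / 2)) * (x ^ 2 - 1)) x := by
      intro x
      have h1 : HasDerivAt (fun y : ℝ => -y ^ 2 / 2) (-x) x := by
        have := ((hasDerivAt_pow 2 x).neg).div_const 2
        refine this.congr_deriv ?_
        simp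
        ring
      have h2 : HasDerivAt (fun y : ℝ => y * Real.exp (-y ^ 2 / 2))
          (1 * Real.exp (-x ^ 2 / 2) + x * (Real.exp (-x ^ 2 / 2) * -x)) x :=
        (hasDerivAt_id x).mul h1.exp
      have := h2.const_mul (-(Real.sqrt (2 * Real.pi))⁻¹)
      exact this.congr_deriv (by ring)
    have hint2 : Integrable (fun x : ℝ => x ^ 2 * Real.exp (-(2⁻¹:ℝ) * x ^ 2)) := by
      have := integrable_rpow_mul_exp_neg_mul_sq (b := 2⁻¹) (by norm_num) (s := ((2:ℕ) : ℝ))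
        (lt_of_lt_of_le neg_one_lt_zero (Nat.cast_nonneg 2))
      simpa [Real.rpow_natCast] using this
    have hint : Integrable (fun x : ℝ =>
        ((Real.sqrt (2 * Real.pi))⁻¹ * Real.exp (-x ^ 2 / 2)) * (x ^ 2 - 1)) := by
      have h : ∀ x : ℝ, ((Real.sqrt (2 * Real.pi))⁻¹ * Real.exp (-x ^ 2 / 2)) * (x ^ 2 - 1)
          = (Real.sqrt (2 * Real.pi))⁻¹ * (x ^ 2 * Real.exp (-(2⁻¹:ℝ) * x ^ 2))
            - (Real.sqrt (2 * Real.pi))⁻¹ * Real.exp (-(2⁻¹:ℝ) * x ^ 2) := by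
        intro x; ring_nf
      simp_rw [h]
      exact (hint2.const_mul _).sub ((integrable_exp_neg_mul_sq (by norm_num)).const_mul _)
    have hf : Integrable (fun x : ℝ =>
        -(Real.sqrt (2 * Real.pi))⁻¹ * (x * Real.exp (-x ^ 2 / 2))) := by
      have h : ∀ x : ℝ, -(Real.sqrt (2 * Real.pi))⁻¹ * (x * Real.exp (-x ^ 2 / 2))
          = -(Real.sqrt (2 * Real.pi))⁻¹ * (x * Real.exp (-(2⁻¹:ℝ) * x ^ 2)) := by
        intro x; ring_nf
      simp_rw [h]
      exact (integrable_mul_exp_neg_mul_sq (by norm_num)).const_mul _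
    exact integral_eq_zero_of_hasDerivAt_of_integrable hderiv hint hf
  have hx2 : Integrable (fun x : ℝ => x ^ 2) stdGauss := integrable_pow_gauss 2
  have := integral_sub hx2 (integrable_const (1:ℝ))
  rw [integral_sub hx2 (integrable_const (1:ℝ))] at key
  simp only [integral_const, measure_univ, probReal_univ, ENNReal.toReal_one, smul_eq_mul, one_mul] at key
  linarith

lemma integral_pow_gauss_nonneg (k : ℕ) (hk : k = 0 ∨ k = 2) :
    ∫ x, x ^ k ∂stdGauss = 1 := by
  rcases hk with h | h <;> subst h
  · exact integral_pow_zero_gauss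
  · exact integral_pow_two_gauss





/-- Type synonym of `ℝ` equipped with the standard Gaussian as volume. -/
def GaussR : Type := ℝ

instance : MeasurableSpace GaussR := (inferInstance : MeasurableSpace ℝ)
noncomputable instance : MeasureSpace GaussR := ⟨stdGauss⟩

instance : IsProbabilityMeasure (volume : Measure GaussR) := by
  show IsProbabilityMeasure stdGauss
  rw [stdGauss]; infer_instance

instance : SigmaFinite (volume : Measure GaussR) := by infer_instance


lemma gaussMatrix_eq_volume (p n : ℕ) :
    gaussMatrix p n = (volume : Measure (Fin p → Fin n → GaussR)) := by
  rw [gaussMatrix]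
  rfl

lemma integral_entry_monomial (p n : ℕ) (e : Fin p × Fin n → ℕ) :
    ∫ Z : Fin p → Fin n → ℝ, ∏ a : Fin p, ∏ m : Fin n, (Z a m) ^ e (a, m) ∂gaussMatrix p n
      = ∏ a : Fin p, ∏ m : Fin n, ∫ x : ℝ, x ^ e (a, m) ∂stdGauss := by
  rw [gaussMatrix_eq_volume]
  have h1 : ∫ Z : Fin p → Fin n → GaussR,
      ∏ a : Fin p, (fun a (y : Fin n → GaussR) => ∏ m : Fin n, (show ℝ from y m) ^ e (a, m)) a (Z a)
        = ∏ a : Fin p, ∫ y : Fin n → GaussR, ∏ m : Fin n, (show ℝ from y m) ^ e (a, m) :=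
    MeasureTheory.integral_fintype_prod_eq_prod
      (fun a (y : Fin n → GaussR) => ∏ m : Fin n, (show ℝ from y m) ^ e (a, m))
  refine h1.trans ?_
  refine Finset.prod_congr rfl fun a _ => ?_
  have h2 : ∫ y : Fin n → GaussR,
      ∏ m : Fin n, (fun m (x : GaussR) => (show ℝ from x) ^ e (a, m)) m (y m)
        = ∏ m : Fin n, ∫ x : GaussR, (show ℝ from x) ^ e (a, m) :=
    MeasureTheory.integral_fintype_prod_eq_prod
      (fun m (x : GaussR) => (show ℝ from x) ^ e (a, m))
  exact h2

lemma integrable_entry_monomial (p n : ℕ) (e : Fin p × Fin n → ℕ) :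
    Integrable (fun Z : Fin p → Fin n → ℝ =>
      ∏ a : Fin p, ∏ m : Fin n, (Z a m) ^ e (a, m)) (gaussMatrix p n) := by
  rw [gaussMatrix_eq_volume]
  have inner : ∀ a : Fin p, Integrable
      (fun y : Fin n → GaussR => ∏ m : Fin n, (show ℝ from y m) ^ e (a, m)) := by
    intro a
    exact MeasureTheory.Integrable.fintype_prod_dep
      (f := fun m (x : GaussR) => (show ℝ from x) ^ e (a, m))
      (fun m => integrable_pow_gauss (e (a, m)))
  exact MeasureTheory.Integrable.fintype_prod_dep
    (f := fun a (y : Fin n → GaussR) => ∏ m : Fin n, (show ℝ from y m) ^ e (a, m)) inner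


open Matrix Polynomial

variable {ι : Type*} [Fintype ι] [DecidableEq ι]

/-- principal minor of `S` on the index set `J`. -/
noncomputable def pminor (S : Matrix ι ι ℝ) (J : Finset ι) : ℝ :=
  (S.submatrix (fun x : {a // a ∈ J} => (x : ι)) (fun x : {a // a ∈ J} => (x : ι))).det

lemma det_eq_det_compl_submatrix {R : Type*} [CommRing R] (N : Matrix ι ι R) (s : Finset ι)
    (h : ∀ j ∈ s, ∀ j', N j j' = if j = j' then (1 : R) else 0) :
    N.det = (N.submatrix (fun x : {a // a ∈ sᶜ} => (x : ι)) (fun x : {a // a ∈ sᶜ} => (x : ι))).det := by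
  classical
  rw [← Matrix.det_submatrix_equiv_self (Equiv.sumCompl (fun a : ι => a ∈ s)) N]
  have hblock : N.submatrix (Equiv.sumCompl (fun a : ι => a ∈ s))
      (Equiv.sumCompl (fun a : ι => a ∈ s)) = Matrix.fromBlocks 1 0
      (Matrix.of fun (x : {a // ¬ a ∈ s}) (y : {a // a ∈ s}) => N ↑x ↑y)
      (N.submatrix (fun x : {a // ¬ a ∈ s} => (x : ι)) (fun x : {a // ¬ a ∈ s} => (x : ι))) := by
    ext x y
    cases x with
    | inl x =>
      cases y with
      | inl y =>
        simp only [Matrix.submatrix_apply, Equiv.sumCompl_apply_inl, Matrix.fromBlocks_apply₁₁]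
        rw [h x x.2 y, Matrix.one_apply]
        simp only [Subtype.ext_iff]
      | inr y =>
        simp only [Matrix.submatrix_apply, Equiv.sumCompl_apply_inl, Equiv.sumCompl_apply_inr,
          Matrix.fromBlocks_apply₁₂, Matrix.zero_apply]
        rw [h x x.2 y]
        have : (x : ι) ≠ (y : ι) := by
          intro hxy
          exact y.2 (hxy ▸ x.2)
        simp [this]
    | inr x =>
      cases y with
      | inl y =>
        simp only [Matrix.submatrix_apply, Equiv.sumCompl_apply_inl, Equiv.sumCompl_apply_inr,
          Matrix.fromBlocks_apply₂₁, Matrix.of_apply]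
      | inr y =>
        simp only [Matrix.submatrix_apply, Equiv.sumCompl_apply_inr, Matrix.fromBlocks_apply₂₂]
  rw [hblock, Matrix.det_fromBlocks_zero₁₂, Matrix.det_one, one_mul]
  -- now identify the two complement subtypes
  rw [← Matrix.det_submatrix_equiv_self
    (Equiv.subtypeEquivRight (fun a : ι => (Finset.mem_compl : a ∈ sᶜ ↔ ¬ a ∈ s)))
    (N.submatrix (fun x : {a // ¬ a ∈ s} => (x : ι)) (fun x : {a // ¬ a ∈ s} => (x : ι)))]
  rw [Matrix.submatrix_submatrix]
  rfl

lemma det_X_one_add (S : Matrix ι ι ℝ) :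
    (Matrix.diagonal (fun _ : ι => (X : ℝ[X])) + S.map C).det
      = ∑ s : Finset ι, (X : ℝ[X]) ^ s.card * C (pminor S sᶜ) := by
  classical
  have base := (Matrix.detRowAlternating (R := ℝ[X]) (n := ι)).toMultilinearMap.map_add_univ
      (fun j => Matrix.diagonal (fun _ : ι => (X : ℝ[X])) j) (fun j => (S.map C) j)
  have hLHS : (Matrix.diagonal (fun _ : ι => (X : ℝ[X])) + S.map C).det
      = ∑ s : Finset ι, Matrix.detRowAlternating
          (s.piecewise (fun j => Matrix.diagonal (fun _ : ι => (X : ℝ[X])) j)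
            (fun j => (S.map C) j)) := base
  rw [hLHS]
  refine Finset.sum_congr rfl fun s _ => ?_
  -- the matrix with 1-rows on s and S.map C rows off s
  set m₀ : ι → ι → ℝ[X] := s.piecewise (fun j => (1 : Matrix ι ι ℝ[X]) j) (fun j => (S.map C) j)
    with hm₀
  have hpiece : s.piecewise (fun j => Matrix.diagonal (fun _ : ι => (X : ℝ[X])) j)
      (fun j => (S.map C) j) = s.piecewise (fun j => (X : ℝ[X]) • m₀ j) m₀ := by
    funext j
    by_cases hj : j ∈ s
    · rw [Finset.piecewise_eq_of_mem _ _ _ hj, Finset.piecewise_eq_of_mem _ _ _ hj, hm₀,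
        Finset.piecewise_eq_of_mem _ _ _ hj]
      funext j'
      simp [Matrix.diagonal_apply, Matrix.one_apply, mul_ite]
    · rw [Finset.piecewise_eq_of_notMem _ _ _ hj, Finset.piecewise_eq_of_notMem _ _ _ hj, hm₀,
        Finset.piecewise_eq_of_notMem _ _ _ hj]
  rw [hpiece]
  have hsmul := (Matrix.detRowAlternating (R := ℝ[X]) (n := ι)).toMultilinearMap.map_piecewise_smul
      (fun _ => (X : ℝ[X])) m₀ s
  rw [show Matrix.detRowAlternating (s.piecewise (fun j => (X : ℝ[X]) • m₀ j) m₀)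
      = (∏ _i ∈ s, (X : ℝ[X])) • Matrix.detRowAlternating m₀ from hsmul, Finset.prod_const]
  -- evaluate det of m₀
  have h1 : Matrix.detRowAlternating (R := ℝ[X]) (n := ι) m₀ = Matrix.det (Matrix.of m₀) := rfl
  have h2 : Matrix.det (Matrix.of m₀)
      = ((Matrix.of m₀).submatrix (fun x : {a // a ∈ sᶜ} => (x : ι))
          (fun x : {a // a ∈ sᶜ} => (x : ι))).det := by
    apply det_eq_det_compl_submatrix
    intro j hj j'
    show m₀ j j' = _
    rw [hm₀, Finset.piecewise_eq_of_mem _ _ _ hj]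
    rw [Matrix.one_apply]
  have h3 : ((Matrix.of m₀).submatrix (fun x : {a // a ∈ sᶜ} => (x : ι))
        (fun x : {a // a ∈ sᶜ} => (x : ι)))
      = ((S.submatrix (fun x : {a // a ∈ sᶜ} => (x : ι))
          (fun x : {a // a ∈ sᶜ} => (x : ι))).map C) := by
    refine Matrix.ext fun x y => ?_
    have hx : ¬ (x : ι) ∈ s := Finset.mem_compl.mp x.2
    show m₀ x y = C (S x y)
    rw [hm₀, Finset.piecewise_eq_of_notMem _ _ _ hx]
    rfl
  rw [h1, h2, h3, ← RingHom.mapMatrix_apply, ← RingHom.map_det, smul_eq_mul]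
  rfl

lemma det_X_one_add_spectral (S : Matrix ι ι ℝ) (hS : S.IsHermitian) :
    (Matrix.diagonal (fun _ : ι => (X : ℝ[X])) + S.map C).det
      = ∏ j : ι, ((X : ℝ[X]) + C (hS.eigenvalues j)) := by
  classical
  set U : Matrix ι ι ℝ := (hS.eigenvectorUnitary : Matrix ι ι ℝ) with hU
  have hUU : U * star U = 1 := (Matrix.mem_unitaryGroup_iff).mp hS.eigenvectorUnitary.2
  have hspec : S = U * Matrix.diagonal hS.eigenvalues * star U := by
    have h := hS.spectral_theorem
    rw [Unitary.conjStarAlgAut_apply] at h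
    convert h using 3 <;> rfl
  have hmap : S.map C = (U.map C) * ((Matrix.diagonal hS.eigenvalues).map C) * ((star U).map C) := by
    conv_lhs => rw [hspec]
    rw [Matrix.map_mul, Matrix.map_mul]
  have hUU' : (U.map C) * ((star U).map C) = 1 := by
    rw [← Matrix.map_mul, hUU, Matrix.map_one C (map_zero C) (map_one C)]
  have hconj : Matrix.diagonal (fun _ : ι => (X : ℝ[X])) + S.map C
      = (U.map C) * (Matrix.diagonal (fun _ : ι => (X : ℝ[X]))
          + (Matrix.diagonal hS.eigenvalues).map C) * ((star U).map C) := by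
    rw [Matrix.mul_add, Matrix.add_mul, hmap]
    congr 1
    have hdiag : Matrix.diagonal (fun _ : ι => (X : ℝ[X])) = (X : ℝ[X]) • (1 : Matrix ι ι ℝ[X]) := by
      rw [Matrix.smul_one_eq_diagonal]
    rw [hdiag, Matrix.mul_smul, Matrix.mul_one, Matrix.smul_mul, hUU']
  rw [hconj, Matrix.det_mul, Matrix.det_mul]
  have : (U.map C).det * ((star U).map C).det = 1 := by
    rw [← Matrix.det_mul, hUU', Matrix.det_one]
  calc (U.map C).det * (Matrix.diagonal (fun _ : ι => (X : ℝ[X]))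
          + (Matrix.diagonal hS.eigenvalues).map C).det * ((star U).map C).det
      = (Matrix.diagonal (fun _ : ι => (X : ℝ[X]))
          + (Matrix.diagonal hS.eigenvalues).map C).det
          * ((U.map C).det * ((star U).map C).det) := by ring
    _ = (Matrix.diagonal (fun _ : ι => (X : ℝ[X])) + (Matrix.diagonal hS.eigenvalues).map C).det := by
        rw [this, mul_one]
    _ = ∏ j : ι, ((X : ℝ[X]) + C (hS.eigenvalues j)) := by
        rw [Matrix.diagonal_map (map_zero C), Matrix.diagonal_add, Matrix.det_diagonal]

lemma trElem_eq_sum_pminor (S : Matrix ι ι ℝ) (hS : S.IsHermitian) {i : ℕ}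
    (hi : i ≤ Fintype.card ι) :
    trElem S i = ∑ J ∈ Finset.powersetCard i (Finset.univ : Finset ι), pminor S J := by
  classical
  have hk : Fintype.card ι - i ≤ (Finset.univ : Finset ι).card := by
    rw [Finset.card_univ]; omega
  -- coefficient of the universal polynomial at `card ι - i`, spectral side
  have h1 : ((Matrix.diagonal (fun _ : ι => (X : ℝ[X])) + S.map C).det).coeff
        (Fintype.card ι - i) = trElem S i := by
    rw [det_X_one_add_spectral S hS]
    rw [Finset.prod_X_add_C_coeff (Finset.univ : Finset ι) hS.eigenvalues hk]
    rw [trElem, dif_pos hS]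
    congr 1
    rw [Finset.card_univ, Nat.sub_sub_self hi]
  -- coefficient, minor side
  have h2 : ((Matrix.diagonal (fun _ : ι => (X : ℝ[X])) + S.map C).det).coeff
        (Fintype.card ι - i)
      = ∑ J ∈ Finset.powersetCard i (Finset.univ : Finset ι), pminor S J := by
    rw [det_X_one_add S, Polynomial.finset_sum_coeff]
    have hterm : ∀ s : Finset ι, ((X : ℝ[X]) ^ s.card * C (pminor S sᶜ)).coeff
        (Fintype.card ι - i) = if s.card = Fintype.card ι - i then pminor S sᶜ else 0 := by
      intro s
      rw [mul_comm, Polynomial.coeff_C_mul, Polynomial.coeff_X_pow]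
      simp [eq_comm]
    simp_rw [hterm]
    rw [← Finset.sum_filter]
    have hfilt : (Finset.univ : Finset (Finset ι)).filter
        (fun s => s.card = Fintype.card ι - i)
        = Finset.powersetCard (Fintype.card ι - i) (Finset.univ : Finset ι) := by
      ext s
      simp [Finset.mem_powersetCard_univ]
    rw [hfilt]
    refine Finset.sum_bij' (fun s _ => sᶜ) (fun J _ => Jᶜ) ?_ ?_ ?_ ?_ ?_
    · intro s hs
      rw [Finset.mem_powersetCard_univ] at hs ⊢
      rw [Finset.card_compl, hs, Nat.sub_sub_self hi]
    · intro J hJ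
      rw [Finset.mem_powersetCard_univ] at hJ ⊢
      rw [Finset.card_compl, hJ]
    · intro s _; exact compl_compl s
    · intro J _; exact compl_compl J
    · intro s _; rfl
  rw [← h1, h2]





section
variable {p n : ℕ} (J : Finset (Fin p))

/-- fiber-counting rewrite: `∏ j, f (g j) = ∏ b, f b ^ #fiber`. -/
lemma prod_comp_eq_prod_pow {α β M : Type*} [Fintype α] [Fintype β] [DecidableEq β]
    [CommMonoid M] (g : α → β) (f : β → M) :
    ∏ j : α, f (g j) = ∏ b : β, f b ^ (Finset.univ.filter (fun j : α => g j = b)).card := by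
  rw [← Finset.prod_fiberwise' Finset.univ g f]
  exact Finset.prod_congr rfl fun b _ => Finset.prod_const _

/-- the exponent function of the monomial attached to `(σ, k)`. -/
def expo (σ : Equiv.Perm {a // a ∈ J}) (k : {a // a ∈ J} → Fin n) : Fin p × Fin n → ℕ :=
  fun b => (Finset.univ.filter (fun j : {a // a ∈ J} => ((σ j : Fin p), k j) = b)).card
    + (Finset.univ.filter (fun j : {a // a ∈ J} => ((j : Fin p), k j) = b)).card

lemma monomial_rewrite (σ : Equiv.Perm {a // a ∈ J}) (k : {a // a ∈ J} → Fin n)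
    (Z : Fin p → Fin n → ℝ) :
    (∏ j : {a // a ∈ J}, Z (σ j) (k j) * Z j (k j))
      = ∏ a : Fin p, ∏ m : Fin n, (Z a m) ^ expo J σ k (a, m) := by
  rw [Finset.prod_mul_distrib]
  rw [prod_comp_eq_prod_pow (fun j : {a // a ∈ J} => ((σ j : Fin p), k j))
    (fun b : Fin p × Fin n => Z b.1 b.2)]
  rw [prod_comp_eq_prod_pow (fun j : {a // a ∈ J} => ((j : Fin p), k j))
    (fun b : Fin p × Fin n => Z b.1 b.2)]
  rw [← Finset.prod_mul_distrib]
  have : ∀ b : Fin p × Fin n, Z b.1 b.2 ^ (Finset.univ.filter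
        (fun j : {a // a ∈ J} => ((σ j : Fin p), k j) = b)).card
      * Z b.1 b.2 ^ (Finset.univ.filter
        (fun j : {a // a ∈ J} => ((j : Fin p), k j) = b)).card
      = Z b.1 b.2 ^ expo J σ k b := fun b => (pow_add _ _ _).symm
  rw [Finset.prod_congr rfl fun b _ => this b]
  rw [Fintype.prod_prod_type]

lemma expectation_monomial (σ : Equiv.Perm {a // a ∈ J}) (k : {a // a ∈ J} → Fin n) :
    ∫ Z : Fin p → Fin n → ℝ,
        (∏ j : {a // a ∈ J}, Z (σ j) (k j) * Z j (k j)) ∂gaussMatrix p n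
      = if k ∘ σ = k then 1 else 0 := by
  classical
  rw [show (fun Z : Fin p → Fin n → ℝ => ∏ j : {a // a ∈ J}, Z (σ j) (k j) * Z j (k j))
      = fun Z => ∏ a : Fin p, ∏ m : Fin n, (Z a m) ^ expo J σ k (a, m) from
    funext fun Z => monomial_rewrite J σ k Z]
  rw [integral_entry_monomial]
  by_cases hks : k ∘ σ = k
  · rw [if_pos hks]
    refine Finset.prod_eq_one fun a _ => Finset.prod_eq_one fun m _ => ?_
    -- the two fibers agree, so the exponent is 0 or 2
    have hfib : (Finset.univ.filter
          (fun u : {a' // a' ∈ J} => ((u : Fin p), k u) = (a, m)))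
        = (Finset.univ.filter
          (fun j : {a' // a' ∈ J} => ((σ j : Fin p), k j) = (a, m))).image σ := by
      ext u
      simp only [Finset.mem_filter, Finset.mem_image, Finset.mem_univ, true_and]
      constructor
      · intro hu
        refine ⟨σ.symm u, ?_, by simp⟩
        have hcoe : (σ (σ.symm u) : Fin p) = (u : Fin p) := by rw [Equiv.apply_symm_apply]
        have hk2 : k (σ.symm u) = k u := by
          conv_rhs => rw [← Equiv.apply_symm_apply σ u]
          exact (congrFun hks (σ.symm u)).symm
        exact Prod.ext (hcoe.trans (congrArg Prod.fst hu)) (hk2.trans (congrArg Prod.snd hu))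
      · rintro ⟨j, hj, rfl⟩
        have hkj : k (σ j) = k j := congrFun hks j
        have : ((σ j : Fin p), k (σ j)) = ((σ j : Fin p), k j) := by rw [hkj]
        exact this.trans hj
    have hcard : (Finset.univ.filter
          (fun j : {a' // a' ∈ J} => ((σ j : Fin p), k j) = (a, m))).card
        = (Finset.univ.filter
          (fun j : {a' // a' ∈ J} => ((j : Fin p), k j) = (a, m))).card := by
      rw [hfib, Finset.card_image_of_injective _ σ.injective]
    have hle : (Finset.univ.filter
          (fun j : {a' // a' ∈ J} => ((j : Fin p), k j) = (a, m))).card ≤ 1 := by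
      refine Finset.card_le_one.mpr fun j hj j' hj' => ?_
      simp only [Finset.mem_filter] at hj hj'
      exact Subtype.ext (congrArg Prod.fst (hj.2.trans hj'.2.symm))
    apply integral_pow_gauss_nonneg
    rw [expo, hcard]
    interval_cases h : (Finset.univ.filter
        (fun j : {a' // a' ∈ J} => ((j : Fin p), k j) = (a, m))).card
    · left; rfl
    · right; rfl
  · rw [if_neg hks]
    -- find an entry with exponent exactly 1
    have : ∃ j₀ : {a' // a' ∈ J}, k (σ j₀) ≠ k j₀ := by
      by_contra h
      push_neg at h
      exact hks (funext fun j => h j)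
    obtain ⟨j₀, hj₀⟩ := this
    apply Finset.prod_eq_zero (Finset.mem_univ ((σ j₀ : Fin p)))
    apply Finset.prod_eq_zero (Finset.mem_univ (k j₀))
    have h1 : (Finset.univ.filter
          (fun j : {a' // a' ∈ J} => ((σ j : Fin p), k j) = ((σ j₀ : Fin p), k j₀)))
        = {j₀} := by
      ext j
      simp only [Finset.mem_filter, Finset.mem_univ, true_and, Finset.mem_singleton]
      constructor
      · intro hj
        exact σ.injective (Subtype.ext (congrArg Prod.fst hj))
      · rintro rfl; rfl
    have h2 : (Finset.univ.filter
          (fun j : {a' // a' ∈ J} => ((j : Fin p), k j) = ((σ j₀ : Fin p), k j₀)))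
        = ∅ := by
      ext j
      simp only [Finset.mem_filter, Finset.mem_univ, true_and, Finset.notMem_empty,
        iff_false]
      intro hj
      have hj1 : (j : Fin p) = (σ j₀ : Fin p) := congrArg Prod.fst hj
      have hj2 : k j = k j₀ := congrArg Prod.snd hj
      have : j = σ j₀ := Subtype.ext hj1
      exact hj₀ (by rw [← this, hj2])
    rw [expo, h1, h2]
    simp only [Finset.card_singleton, Finset.card_empty, add_zero]
    rw [integral_pow_one_gauss]

lemma sign_sum_eq (k : {a // a ∈ J} → Fin n) :
    (∑ σ : Equiv.Perm {a // a ∈ J},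
        ((Equiv.Perm.sign σ : ℤ) : ℝ) * (if k ∘ σ = k then 1 else 0))
      = if Function.Injective k then 1 else 0 := by
  classical
  simp_rw [mul_ite, mul_one, mul_zero]
  rw [← Finset.sum_filter]
  by_cases hk : Function.Injective k
  · rw [if_pos hk]
    have hfilt : (Finset.univ.filter (fun σ : Equiv.Perm {a // a ∈ J} => k ∘ σ = k))
        = {1} := by
      ext σ
      simp only [Finset.mem_filter, Finset.mem_univ, true_and, Finset.mem_singleton]
      constructor
      · intro h
        ext j
        have hj : σ j = j := hk (congrFun h j)
        simp [hj]
      · rintro rfl; rfl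
    rw [hfilt, Finset.sum_singleton]
    simp
  · rw [if_neg hk]
    rw [Function.not_injective_iff] at hk
    obtain ⟨j₁, j₂, hk12, hne⟩ := hk
    refine Finset.sum_involution
      (fun σ _ => σ * Equiv.swap j₁ j₂) ?_ ?_ ?_ ?_
    · intro σ _
      have hsign : ((Equiv.Perm.sign (σ * Equiv.swap j₁ j₂) : ℤ) : ℝ)
          = -((Equiv.Perm.sign σ : ℤ) : ℝ) := by
        rw [Equiv.Perm.sign_mul, Equiv.Perm.sign_swap hne]
        push_cast
        ring
      rw [hsign]; ring
    · intro σ _ _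
      intro h
      have := congrArg (fun τ => σ⁻¹ * τ) h
      simp only [← mul_assoc, inv_mul_cancel, one_mul] at this
      have h2 : Equiv.swap j₁ j₂ = 1 := this
      have := Equiv.swap_apply_left j₁ j₂
      rw [h2] at this
      exact hne (by simpa using this)
    · intro σ hσ
      simp only [Finset.mem_filter, Finset.mem_univ, true_and] at hσ ⊢
      funext j
      have h1 : k (σ (Equiv.swap j₁ j₂ j)) = k (Equiv.swap j₁ j₂ j) := congrFun hσ _
      have h2 : k (Equiv.swap j₁ j₂ j) = k j := by
        rcases eq_or_ne j j₁ with rfl | hj1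
        · rw [Equiv.swap_apply_left, hk12]
        rcases eq_or_ne j j₂ with rfl | hj2
        · rw [Equiv.swap_apply_right, hk12]
        · rw [Equiv.swap_apply_of_ne_of_ne hj1 hj2]
      calc k ((σ * Equiv.swap j₁ j₂) j) = k (σ (Equiv.swap j₁ j₂ j)) := rfl
        _ = k (Equiv.swap j₁ j₂ j) := h1
        _ = k j := h2
    · intro σ _
      show σ * Equiv.swap j₁ j₂ * Equiv.swap j₁ j₂ = σ
      rw [mul_assoc, Equiv.swap_mul_self, mul_one]

lemma count_injective {i : ℕ} (hJ : J.card = i) :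
    (∑ k : {a // a ∈ J} → Fin n, (if Function.Injective k then (1:ℝ) else 0))
      = (n.descFactorial i : ℝ) := by
  classical
  rw [Finset.sum_boole]
  have hc : (Finset.univ.filter
        (fun k : {a // a ∈ J} → Fin n => Function.Injective k)).card
      = Fintype.card ({a // a ∈ J} ↪ Fin n) := by
    rw [← Fintype.card_subtype]
    exact Fintype.card_congr (Equiv.subtypeInjectiveEquivEmbedding _ _)
  rw [hc, Fintype.card_embedding_eq, Fintype.card_coe, hJ, Fintype.card_fin]
end




lemma pminor_expand {p n : ℕ} (Z : Fin p → Fin n → ℝ) (J : Finset (Fin p)) :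
    pminor (Matrix.of Z * (Matrix.of Z)ᵀ) J
      = ∑ σ : Equiv.Perm {a // a ∈ J}, ∑ k : {a // a ∈ J} → Fin n,
          ((Equiv.Perm.sign σ : ℤ) : ℝ) * ∏ j : {a // a ∈ J}, Z (σ j) (k j) * Z j (k j) := by
  classical
  rw [pminor, Matrix.det_apply']
  refine Finset.sum_congr rfl fun σ _ => ?_
  have hentry : ∀ j j' : {a // a ∈ J},
      ((Matrix.of Z * (Matrix.of Z)ᵀ).submatrix (fun x : {a // a ∈ J} => (x : Fin p))
        (fun x : {a // a ∈ J} => (x : Fin p))) j j'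
      = ∑ m : Fin n, Z j m * Z j' m := by
    intro j j'
    simp [Matrix.mul_apply]
  have : (∏ j : {a // a ∈ J},
      ((Matrix.of Z * (Matrix.of Z)ᵀ).submatrix (fun x : {a // a ∈ J} => (x : Fin p))
        (fun x : {a // a ∈ J} => (x : Fin p))) (σ j) j)
      = ∑ k : {a // a ∈ J} → Fin n, ∏ j : {a // a ∈ J}, Z (σ j) (k j) * Z j (k j) := by
    rw [Finset.prod_congr rfl fun j _ => hentry (σ j) j]
    rw [Finset.prod_univ_sum]
    rw [Fintype.piFinset_univ]
  rw [this, Finset.mul_sum]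

end Aux

/-- For the central Wishart matrix `W = ZZᵀ` with `Z` a `p × n`
matrix of i.i.d. standard normals, for `1 ≤ i ≤ p ≤ n`:
`i! · E[Tr_i(W)] = (n)_i · (p)_i`. -/
theorem stmt_12 (p n : ℕ) (i : ℕ) (hi1 : 1 ≤ i) (hip : i ≤ p) (hpn : p ≤ n) :
    (i.factorial : ℝ) *
        ∫ Z : Fin p → Fin n → ℝ,
          trElem (Matrix.of Z * (Matrix.of Z)ᵀ) i ∂gaussMatrix p n =
      (n.descFactorial i : ℝ) * (p.descFactorial i : ℝ) := by
  classical
  have hherm : ∀ Z : Fin p → Fin n → ℝ, (Matrix.of Z * (Matrix.of Z)ᵀ).IsHermitian := by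
    intro Z
    have := Matrix.isHermitian_mul_conjTranspose_self (Matrix.of Z)
    rwa [Matrix.conjTranspose_eq_transpose_of_trivial] at this
  have hkey : (fun Z : Fin p → Fin n → ℝ => trElem (Matrix.of Z * (Matrix.of Z)ᵀ) i)
      = fun Z => ∑ J ∈ Finset.powersetCard i (Finset.univ : Finset (Fin p)),
          ∑ σ : Equiv.Perm {a // a ∈ J}, ∑ k : {a // a ∈ J} → Fin n,
            ((Equiv.Perm.sign σ : ℤ) : ℝ) * ∏ j : {a // a ∈ J}, Z (σ j) (k j) * Z j (k j) := by
    funext Z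
    rw [trElem_eq_sum_pminor _ (hherm Z) (by rw [Fintype.card_fin]; exact hip)]
    exact Finset.sum_congr rfl fun J _ => pminor_expand Z J
  rw [hkey]
  have hmono_int : ∀ (J : Finset (Fin p)) (σ : Equiv.Perm {a // a ∈ J})
      (k : {a // a ∈ J} → Fin n),
      Integrable (fun Z : Fin p → Fin n → ℝ =>
        ∏ j : {a // a ∈ J}, Z (σ j) (k j) * Z j (k j)) (gaussMatrix p n) := by
    intro J σ k
    rw [show (fun Z : Fin p → Fin n → ℝ => ∏ j : {a // a ∈ J}, Z (σ j) (k j) * Z j (k j))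
        = fun Z => ∏ a : Fin p, ∏ m : Fin n, (Z a m) ^ expo J σ k (a, m) from
      funext fun Z => monomial_rewrite J σ k Z]
    exact integrable_entry_monomial p n (expo J σ k)
  rw [integral_finset_sum _ (fun J _ => integrable_finset_sum _ (fun σ _ =>
    integrable_finset_sum _ (fun k _ => (hmono_int J σ k).const_mul _)))]
  have hJval : ∀ J ∈ Finset.powersetCard i (Finset.univ : Finset (Fin p)),
      (∫ Z : Fin p → Fin n → ℝ, (∑ σ : Equiv.Perm {a // a ∈ J}, ∑ k : {a // a ∈ J} → Fin n,
          ((Equiv.Perm.sign σ : ℤ) : ℝ) * ∏ j : {a // a ∈ J}, Z (σ j) (k j) * Z j (k j))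
        ∂gaussMatrix p n) = (n.descFactorial i : ℝ) := by
    intro J hJ
    rw [integral_finset_sum _ (fun σ _ => integrable_finset_sum _
      (fun k _ => (hmono_int J σ k).const_mul _))]
    have : ∀ σ : Equiv.Perm {a // a ∈ J},
        (∫ Z : Fin p → Fin n → ℝ, (∑ k : {a // a ∈ J} → Fin n,
          ((Equiv.Perm.sign σ : ℤ) : ℝ) * ∏ j : {a // a ∈ J}, Z (σ j) (k j) * Z j (k j))
        ∂gaussMatrix p n)
        = ∑ k : {a // a ∈ J} → Fin n,
            ((Equiv.Perm.sign σ : ℤ) : ℝ) * (if k ∘ σ = k then 1 else 0) := by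
      intro σ
      rw [integral_finset_sum _ (fun k _ => (hmono_int J σ k).const_mul _)]
      refine Finset.sum_congr rfl fun k _ => ?_
      rw [MeasureTheory.integral_const_mul, expectation_monomial J σ k]
    rw [Finset.sum_congr rfl fun σ _ => this σ]
    rw [Finset.sum_comm]
    rw [Finset.sum_congr rfl fun k _ => sign_sum_eq J k]
    exact count_injective J (Finset.mem_powersetCard_univ.mp hJ)
  rw [Finset.sum_congr rfl hJval]
  rw [Finset.sum_const, Finset.card_powersetCard, Finset.card_univ, Fintype.card_fin,
    nsmul_eq_mul]
  rw [Nat.descFactorial_eq_factorial_mul_choose p i]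
  push_cast
  ring
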